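/- Let t be an ordered labeled tree and let c1, c2, …, cm be all the nodes of t that are first children of their parents, listed in the order in which their closing tags appear in XML(FCNS(t)) (i.e., pos'(c̄1) < pos'(c̄2) < ⋯ < pos'(c̄m)), and let pi denote the parent of ci in t. Then the closing tags of the parents appear in the same order in XML(t): pos(p̄1) < pos(p̄2) < ⋯ < pos(p̄m). -/

import Mathlib

set_option linter.unnecessarySimpa false


/-- Ordered labeled trees (rose trees). -/
inductive RTree (α : Type) : Type
  | node : α → List (RTree α) → RTree α

/-- Extended binary trees: every node has an optional left and right child. -/
inductive BTree (α : Type) : Type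
  | nil : BTree α
  | node : α → BTree α → BTree α → BTree α

namespace BTree

/-- Tag sequence of an extended binary tree: opening tag, left subtree,
right subtree, closing tag.  `false` = opening tag, `true` = closing tag. -/
def btags {α : Type} : BTree α → List (α × Bool)
  | .nil => []
  | .node a l r => (a, false) :: (btags l ++ btags r ++ [(a, true)])

end BTree

namespace RTree

variable {α : Type}

def label : RTree α → α
  | .node a _ => a

def childLabels : RTree α → List α
  | .node _ cs => cs.map label

mutual
/-- Number of nodes of a tree. -/
def size : RTree α → ℕ
  | .node _ cs => 1 + sizeL cs
def sizeL : List (RTree α) → ℕ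
  | [] => 0
  | c :: cs => size c + sizeL cs
end

mutual
/-- `XML(t)`: the tag sequence of a depth-first traversal;
`(a, false)` is an opening tag, `(a, true)` a closing tag. -/
def xml : RTree α → List (α × Bool)
  | .node a cs => (a, false) :: (xmlL cs ++ [(a, true)])
def xmlL : List (RTree α) → List (α × Bool)
  | [] => []
  | c :: cs => xml c ++ xmlL cs
end

mutual
/-- XML tag sequence where each node is identified by its path
(list of child indices from the root). -/
def ptags : RTree α → List ℕ → List (List ℕ × Bool)
  | .node _ cs, p => (p, false) :: (ptagsL cs p 0 ++ [(p, true)])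
def ptagsL : List (RTree α) → List ℕ → ℕ → List (List ℕ × Bool)
  | [], _, _ => []
  | c :: cs, p, i => ptags c (p ++ [i]) ++ ptagsL cs p (i + 1)
end

/-- `XML(t)`, with nodes identified by their paths. -/
def tagList (t : RTree α) : List (List ℕ × Bool) := ptags t []

/-- `pos(v)`: (1-indexed) position of the opening tag of node `v` in `XML(t)`. -/
def posOpen (t : RTree α) (v : List ℕ) : ℕ := (tagList t).idxOf (v, false) + 1

/-- `pos(v̄)`: (1-indexed) position of the closing tag of node `v` in `XML(t)`. -/
def posClose (t : RTree α) (v : List ℕ) : ℕ := (tagList t).idxOf (v, true) + 1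

/-- Subtree of `t` rooted at the node with path `p` (if any). -/
def subtreeAt : RTree α → List ℕ → Option (RTree α)
  | t, [] => some t
  | .node _ cs, i :: p =>
    match cs[i]? with
    | some c => subtreeAt c p
    | none => none

/-- `p` is (the path of) a node of `t`. -/
def IsNode (t : RTree α) (p : List ℕ) : Prop := (subtreeAt t p).isSome

/-- First-child next-sibling encoding of a forest. -/
def fcnsL : List (RTree α) → BTree α
  | [] => .nil
  | .node a cs :: ts => .node a (fcnsL cs) (fcnsL ts)

/-- First-child next-sibling encoding `FCNS(t)`. -/
def fcns (t : RTree α) : BTree α := fcnsL [t]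

/-- FCNS encoding of a forest, nodes identified by their paths in the original tree;
`p` is the path of the parent, `i` the index of the first tree of the forest. -/
def pfcnsL : List (RTree α) → List ℕ → ℕ → BTree (List ℕ)
  | [], _, _ => .nil
  | .node _ cs :: ts, p, i =>
      .node (p ++ [i]) (pfcnsL cs (p ++ [i]) 0) (pfcnsL ts p (i + 1))

/-- `FCNS(t)`, with nodes identified by their paths in `t`. -/
def pfcns : RTree α → BTree (List ℕ)
  | .node _ cs => .node [] (pfcnsL cs [] 0) .nil

/-- `XML(FCNS(t))`, with nodes identified by their paths in `t`. -/
def btagList (t : RTree α) : List (List ℕ × Bool) := (pfcns t).btags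

/-- `pos'(v)`: position of the opening tag of `v` in `XML(FCNS(t))`. -/
def posOpen' (t : RTree α) (v : List ℕ) : ℕ := (btagList t).idxOf (v, false) + 1

/-- `pos'(v̄)`: position of the closing tag of `v` in `XML(FCNS(t))`. -/
def posClose' (t : RTree α) (v : List ℕ) : ℕ := (btagList t).idxOf (v, true) + 1

/-- A tree is valid against a DTD `D` if for every node, the word of labels of
its children belongs to `D` applied to the node's label. -/
def Valid (D : α → List α → Prop) (t : RTree α) : Prop :=
  ∀ p st, subtreeAt t p = some st → D st.label st.childLabels

end RTree

/-- `w` is a later sibling of `v` (as paths): same parent, larger last index. -/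
def LaterSib (w v : List ℕ) : Prop := ∃ q i j, v = q ++ [i] ∧ w = q ++ [j] ∧ i < j


/-! ### Auxiliary machinery -/

section ListAux

variable {β : Type*} [BEq β] [LawfulBEq β]

lemma idx_cons_self (a : β) (l : List β) : (a :: l).idxOf a = 0 := by
  simp [List.idxOf_cons]

lemma idx_cons_ne {x a : β} (l : List β) (h : x ≠ a) : (x :: l).idxOf a = l.idxOf a + 1 := by
  have hb : (x == a) = false := beq_eq_false_iff_ne.mpr h
  simp [List.idxOf_cons, hb]

lemma idx_inj {l : List β} {a b : β} (ha : a ∈ l) (hb : b ∈ l)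
    (h : l.idxOf a = l.idxOf b) : a = b := by
  induction l with
  | nil => simp at ha
  | cons x l ih =>
    by_cases hax : x = a
    · by_cases hbx : x = b
      · rw [← hax, ← hbx]
      · subst hax
        rw [idx_cons_self, idx_cons_ne l hbx] at h
        omega
    · by_cases hbx : x = b
      · subst hbx
        rw [idx_cons_self, idx_cons_ne l hax] at h
        omega
      · rw [idx_cons_ne l hax, idx_cons_ne l hbx] at h
        exact ih ((List.mem_cons.mp ha).resolve_left (fun e => hax e.symm))
          ((List.mem_cons.mp hb).resolve_left (fun e => hbx e.symm)) (by omega)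

lemma indexOf_lt_of_sublist {l' l : List β} (hs : l'.Sublist l) :
    l.Nodup → ∀ {a b : β}, a ∈ l' → b ∈ l' →
      l'.idxOf a < l'.idxOf b → l.idxOf a < l.idxOf b := by
  induction hs with
  | slnil => intro _ a b ha; simp at ha
  | @cons l' l x hs ih =>
    intro hn a b ha hb hlt
    have hx : x ∉ l := (List.nodup_cons.mp hn).1
    have ha' : x ≠ a := fun e => hx (e ▸ hs.mem ha)
    have hb' : x ≠ b := fun e => hx (e ▸ hs.mem hb)
    rw [idx_cons_ne _ ha', idx_cons_ne _ hb']
    have := ih (List.nodup_cons.mp hn).2 ha hb hlt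
    omega
  | @cons_cons l' l x hs ih =>
    intro hn a b ha hb hlt
    by_cases hax : a = x
    · subst hax
      have hbx : a ≠ b := by
        intro e; subst e; exact lt_irrefl _ hlt
      rw [idx_cons_self, idx_cons_ne _ hbx]
      omega
    · have hbx : b ≠ x := by
        intro e; subst e
        rw [idx_cons_self] at hlt; omega
      have ha2 : a ∈ l' := (List.mem_cons.mp ha).resolve_left hax
      have hb2 : b ∈ l' := (List.mem_cons.mp hb).resolve_left hbx
      rw [idx_cons_ne _ (Ne.symm hax), idx_cons_ne _ (Ne.symm hbx)] at hlt
      rw [idx_cons_ne _ (Ne.symm hax), idx_cons_ne _ (Ne.symm hbx)]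
      have := ih (List.nodup_cons.mp hn).2 ha2 hb2 (by omega)
      omega

lemma indexOf_map {γ : Type*} [BEq γ] [LawfulBEq γ] {f : β → γ} (hf : Function.Injective f)
    (l : List β) (a : β) : (l.map f).idxOf (f a) = l.idxOf a := by
  induction l with
  | nil => simp
  | cons x l ih =>
    by_cases h : a = x
    · subst h; rw [List.map_cons, idx_cons_self, idx_cons_self]
    · rw [List.map_cons, idx_cons_ne _ (fun e => h (hf e).symm),
        idx_cons_ne _ (Ne.symm h), ih]

lemma pre_ne_of_idx {p x y : List ℕ} {i j : ℕ} (hx : (p ++ [i]).IsPrefix x)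
    (hy : (p ++ [j]).IsPrefix y) (hij : i ≠ j) : x ≠ y := by
  rintro rfl
  obtain ⟨s, rfl⟩ := hx
  obtain ⟨s', he⟩ := hy
  rw [List.append_assoc, List.append_assoc] at he
  have := List.append_cancel_left he
  simp only [List.singleton_append, List.cons.injEq] at this
  exact hij this.1.symm

lemma pre_ne_self {p x : List ℕ} {i : ℕ} (h : (p ++ [i]).IsPrefix x) : x ≠ p := by
  rintro rfl
  have := h.length_le
  simp at this

end ListAux

namespace RTree

variable {α : Type}

mutual
/-- Postorder sequence of (paths of) nodes having at least one child. -/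
def pc : RTree α → List ℕ → List (List ℕ)
  | .node _ cs, p => pcL cs p 0 ++ (if cs.isEmpty then [] else [p])
def pcL : List (RTree α) → List ℕ → ℕ → List (List ℕ)
  | [], _, _ => []
  | c :: cs, p, i => pc c (p ++ [i]) ++ pcL cs p (i + 1)
end

/-! #### Shape and nodup lemmas for `ptagsL` -/

theorem ptagsL_shape : ∀ (ts : List (RTree α)) (p : List ℕ) (i : ℕ),
    (∀ x b, (x, b) ∈ ptagsL ts p i → ∃ j, i ≤ j ∧ (p ++ [j]).IsPrefix x) ∧
      (ptagsL ts p i).Nodup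
  | [], p, i => by simp [ptagsL]
  | .node a cs :: ts, p, i => by
    obtain ⟨hA, hAnd⟩ := ptagsL_shape cs (p ++ [i]) 0
    obtain ⟨hB, hBnd⟩ := ptagsL_shape ts p (i + 1)
    have keyA : ∀ x b, (x, b) ∈ ptagsL cs (p ++ [i]) 0 → (p ++ [i]).IsPrefix x := by
      intro x b hx
      obtain ⟨j, -, hj⟩ := hA x b hx
      exact (List.prefix_append _ _).trans hj
    have keyAne : ∀ x b, (x, b) ∈ ptagsL cs (p ++ [i]) 0 → x ≠ p ++ [i] := by
      intro x b hx
      obtain ⟨j, -, hj⟩ := hA x b hx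
      exact pre_ne_self hj
    have keyAB : ∀ x bx y _by, (x, bx) ∈ ptagsL cs (p ++ [i]) 0 →
        (y, _by) ∈ ptagsL ts p (i + 1) → x ≠ y := by
      intro x bx y _by hx hy
      obtain ⟨j, hj1, hj2⟩ := hB y _by hy
      exact pre_ne_of_idx (keyA x bx hx) hj2 (by omega)
    have keyvB : ∀ y _by, (y, _by) ∈ ptagsL ts p (i + 1) → p ++ [i] ≠ y := by
      intro y _by hy
      obtain ⟨j, hj1, hj2⟩ := hB y _by hy
      exact pre_ne_of_idx (List.prefix_refl _) hj2 (by omega)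
    simp only [ptagsL, ptags, List.cons_append]
    constructor
    · rintro x b hx
      have hx' : x = p ++ [i] ∨ (x, b) ∈ ptagsL cs (p ++ [i]) 0 ∨
          (x, b) ∈ ptagsL ts p (i + 1) := by
        simp only [List.mem_cons, List.mem_append, List.mem_singleton, Prod.mk.injEq] at hx
        tauto
      rcases hx' with rfl | hx' | hx'
      · exact ⟨i, le_refl _, List.prefix_refl _⟩
      · exact ⟨i, le_refl _, keyA x b hx'⟩
      · obtain ⟨j, hj1, hj2⟩ := hB x b hx'
        exact ⟨j, by omega, hj2⟩
    · rw [List.nodup_cons]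
      constructor
      · simp only [List.mem_append, List.mem_singleton, not_or, Prod.mk.injEq]
        refine ⟨⟨fun hx => keyAne _ _ hx rfl, by simp⟩, fun hx => keyvB _ _ hx rfl⟩
      · refine List.Nodup.append (List.Nodup.append hAnd (by simp) ?_) hBnd ?_
        · rintro ⟨x, b⟩ hx hmem
          rw [List.mem_singleton] at hmem
          exact keyAne _ _ hx (congrArg Prod.fst hmem)
        · rintro ⟨x, b⟩ hx hx2
          rw [List.mem_append, List.mem_singleton] at hx
          rcases hx with hx | hx
          · exact keyAB _ _ _ _ hx hx2 rfl
          · exact keyvB _ _ hx2 (congrArg Prod.fst hx).symm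
termination_by ts => sizeL ts
decreasing_by
  all_goals (simp [sizeL, size]; try omega)

theorem tagList_nodup (t : RTree α) : (tagList t).Nodup := by
  obtain ⟨a, cs⟩ := t
  obtain ⟨hA, hAnd⟩ := ptagsL_shape cs [] 0
  have keyAne : ∀ x b, (x, b) ∈ ptagsL cs [] 0 → x ≠ [] := by
    intro x b hx
    obtain ⟨j, -, hj⟩ := hA x b hx
    exact pre_ne_self hj
  show (ptags (RTree.node a cs) []).Nodup
  simp only [ptags]
  rw [List.nodup_cons]
  constructor
  · simp only [List.mem_append, List.mem_singleton, not_or, Prod.mk.injEq]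
    exact ⟨fun hx => keyAne _ _ hx rfl, by simp⟩
  · refine List.Nodup.append hAnd (by simp) ?_
    rintro ⟨x, b⟩ hx hmem
    rw [List.mem_singleton] at hmem
    exact keyAne _ _ hx (congrArg Prod.fst hmem)

/-! #### Shape and nodup lemmas for `btags ∘ pfcnsL` -/

theorem bshape : ∀ (ts : List (RTree α)) (p : List ℕ) (i : ℕ),
    (∀ x b, (x, b) ∈ (pfcnsL ts p i).btags → ∃ j, i ≤ j ∧ (p ++ [j]).IsPrefix x) ∧
      ((pfcnsL ts p i).btags).Nodup
  | [], p, i => by simp [pfcnsL, BTree.btags]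
  | .node a cs :: ts, p, i => by
    obtain ⟨hA, hAnd⟩ := bshape cs (p ++ [i]) 0
    obtain ⟨hB, hBnd⟩ := bshape ts p (i + 1)
    have keyA : ∀ x b, (x, b) ∈ (pfcnsL cs (p ++ [i]) 0).btags → (p ++ [i]).IsPrefix x := by
      intro x b hx
      obtain ⟨j, -, hj⟩ := hA x b hx
      exact (List.prefix_append _ _).trans hj
    have keyAne : ∀ x b, (x, b) ∈ (pfcnsL cs (p ++ [i]) 0).btags → x ≠ p ++ [i] := by
      intro x b hx
      obtain ⟨j, -, hj⟩ := hA x b hx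
      exact pre_ne_self hj
    have keyAB : ∀ x bx y _by, (x, bx) ∈ (pfcnsL cs (p ++ [i]) 0).btags →
        (y, _by) ∈ (pfcnsL ts p (i + 1)).btags → x ≠ y := by
      intro x bx y _by hx hy
      obtain ⟨j, hj1, hj2⟩ := hB y _by hy
      exact pre_ne_of_idx (keyA x bx hx) hj2 (by omega)
    have keyvB : ∀ y _by, (y, _by) ∈ (pfcnsL ts p (i + 1)).btags → p ++ [i] ≠ y := by
      intro y _by hy
      obtain ⟨j, hj1, hj2⟩ := hB y _by hy
      exact pre_ne_of_idx (List.prefix_refl _) hj2 (by omega)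
    simp only [pfcnsL, BTree.btags]
    constructor
    · rintro x b hx
      have hx' : x = p ++ [i] ∨ (x, b) ∈ (pfcnsL cs (p ++ [i]) 0).btags ∨
          (x, b) ∈ (pfcnsL ts p (i + 1)).btags := by
        simp only [List.mem_cons, List.mem_append, List.mem_singleton, Prod.mk.injEq] at hx
        tauto
      rcases hx' with rfl | hx' | hx'
      · exact ⟨i, le_refl _, List.prefix_refl _⟩
      · exact ⟨i, le_refl _, keyA x b hx'⟩
      · obtain ⟨j, hj1, hj2⟩ := hB x b hx'
        exact ⟨j, by omega, hj2⟩
    · rw [List.nodup_cons]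
      constructor
      · simp only [List.mem_append, List.mem_singleton, not_or, Prod.mk.injEq]
        exact ⟨⟨fun hx => keyAne _ _ hx rfl, fun hx => keyvB _ _ hx rfl⟩, by simp⟩
      · refine List.Nodup.append (List.Nodup.append hAnd hBnd ?_) (by simp) ?_
        · rintro ⟨x, b⟩ hx hx2
          exact keyAB _ _ _ _ hx hx2 rfl
        · rintro ⟨x, b⟩ hx hmem
          rw [List.mem_singleton] at hmem
          rw [List.mem_append] at hx
          rcases hx with hx | hx
          · exact keyAne _ _ hx (congrArg Prod.fst hmem)
          · exact keyvB _ _ hx (congrArg Prod.fst hmem).symm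
termination_by ts => sizeL ts
decreasing_by
  all_goals (simp [sizeL, size]; try omega)

lemma btagList_eq (a : α) (cs : List (RTree α)) :
    btagList (RTree.node a cs) =
      ([], false) :: ((pfcnsL cs [] 0).btags ++ [(([] : List ℕ), true)]) := by
  simp [btagList, pfcns, BTree.btags]

theorem btagList_nodup (t : RTree α) : (btagList t).Nodup := by
  obtain ⟨a, cs⟩ := t
  obtain ⟨hA, hAnd⟩ := bshape cs [] 0
  have keyAne : ∀ x b, (x, b) ∈ (pfcnsL cs [] 0).btags → x ≠ [] := by
    intro x b hx
    obtain ⟨j, -, hj⟩ := hA x b hx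
    exact pre_ne_self hj
  rw [btagList_eq, List.nodup_cons]
  constructor
  · simp only [List.mem_append, List.mem_singleton, not_or, Prod.mk.injEq]
    exact ⟨fun hx => keyAne _ _ hx rfl, by simp⟩
  · refine List.Nodup.append hAnd (by simp) ?_
    rintro ⟨x, b⟩ hx hmem
    rw [List.mem_singleton] at hmem
    exact keyAne _ _ hx (congrArg Prod.fst hmem)

/-! #### Membership of parents in `pc` -/

theorem mem_pcL : ∀ (cs : List (RTree α)) (k i : ℕ) (c : RTree α) (r x : List ℕ),
    cs[k]? = some c → x ∈ pc c (r ++ [i + k]) → x ∈ pcL cs r i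
  | [], k, _, _, _, _, h, _ => by simp at h
  | c' :: cs, 0, i, c, r, x, h, hx => by
    simp only [List.getElem?_cons_zero] at h
    obtain rfl : c' = c := by injection h
    simp only [pcL, List.mem_append]
    left
    simpa using hx
  | c' :: cs, k + 1, i, c, r, x, h, hx => by
    have h' : cs[k]? = some c := by simpa [List.getElem?_cons_succ] using h
    have hx' : x ∈ pc c (r ++ [(i + 1) + k]) := by
      rw [show (i + 1) + k = i + (k + 1) by omega]; exact hx
    simp only [pcL, List.mem_append]
    right
    exact mem_pcL cs k (i + 1) c r x h' hx'

theorem mem_pc : ∀ (q : List ℕ) (t : RTree α) (r : List ℕ),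
    (∃ a cs, subtreeAt t q = some (RTree.node a cs) ∧ cs ≠ []) → (r ++ q) ∈ pc t r := by
  intro q
  induction q with
  | nil =>
    rintro ⟨a, cs⟩ r ⟨a', cs', hst, hne⟩
    simp only [subtreeAt, Option.some.injEq] at hst
    rw [RTree.node.injEq] at hst
    obtain ⟨rfl, rfl⟩ := hst
    simp [pc, List.isEmpty_iff, hne]
  | cons i q' ih =>
    rintro ⟨a, cs⟩ r hex
    obtain ⟨a', cs', hst, hne⟩ := hex
    simp only [subtreeAt] at hst
    cases hc : cs[i]? with
    | none => rw [hc] at hst; simp at hst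
    | some c =>
      rw [hc] at hst
      have hmem : ((r ++ [i]) ++ q') ∈ pc c (r ++ [i]) := ih c (r ++ [i]) ⟨a', cs', hst, hne⟩
      have : (r ++ [i]) ++ q' ∈ pcL cs r 0 :=
        mem_pcL cs i 0 c r _ hc (by simpa using hmem)
      simp only [pc, List.mem_append]
      left
      simpa [List.append_assoc] using this

theorem subtreeAt_append : ∀ (q : List ℕ) (t : RTree α) (q' : List ℕ),
    subtreeAt t (q ++ q') = (subtreeAt t q).bind (fun s => subtreeAt s q')
  | [], t, q' => by simp [subtreeAt]
  | i :: q, .node a cs, q' => by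
    simp only [List.cons_append, subtreeAt]
    cases hc : cs[i]? with
    | none => simp
    | some c => simp [subtreeAt_append q c q']

theorem exists_children (t : RTree α) (q : List ℕ) (h : IsNode t (q ++ [0])) :
    ∃ a cs, subtreeAt t q = some (RTree.node a cs) ∧ cs ≠ [] := by
  unfold IsNode at h
  rw [subtreeAt_append] at h
  cases hst : subtreeAt t q with
  | none => rw [hst] at h; simp at h
  | some s =>
    rw [hst] at h
    obtain ⟨a, cs⟩ := s
    refine ⟨a, cs, rfl, ?_⟩
    rintro rfl
    simp [subtreeAt] at h

/-! #### Sublist lemmas -/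

theorem pcL_sublist : ∀ (ts : List (RTree α)) (p : List ℕ) (i : ℕ),
    ((pcL ts p i).map (fun q => (q, true))).Sublist (ptagsL ts p i)
  | [], _, _ => by simp [pcL, ptagsL]
  | .node a cs :: ts, p, i => by
    have H1 := pcL_sublist cs (p ++ [i]) 0
    have H2 := pcL_sublist ts p (i + 1)
    simp only [pcL, pc, ptagsL, ptags, List.map_append]
    refine List.Sublist.append ?_ H2
    refine List.Sublist.cons _ ?_
    refine List.Sublist.append H1 ?_
    by_cases hcs : cs.isEmpty <;> simp [hcs]
termination_by ts => sizeL ts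
decreasing_by
  all_goals (simp [sizeL, size]; try omega)

theorem pcL_sublist' : ∀ (ts : List (RTree α)) (p : List ℕ) (i : ℕ),
    ((pcL ts p i).map (fun q => (q ++ [0], true)) ++
        if ts.isEmpty then [] else if i = 0 then [(p ++ [0], true)] else []).Sublist
      (pfcnsL ts p i).btags
  | [], _, _ => by simp [pcL, pfcnsL, BTree.btags]
  | .node a cs :: ts, p, i => by
    have H1 := pcL_sublist' cs (p ++ [i]) 0
    have H2 := pcL_sublist' ts p (i + 1)
    simp only [List.isEmpty_cons, if_neg, Bool.false_eq_true, not_false_eq_true,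
      pcL, pc, pfcnsL, BTree.btags, List.map_append] at *
    have H2' : ((pcL ts p (i + 1)).map (fun q => (q ++ [0], true))).Sublist
        (pfcnsL ts p (i + 1)).btags := by
      refine List.Sublist.trans ?_ H2
      simp
    have hC : (if i = 0 then [(p ++ [0], true)] else ([] : List (List ℕ × Bool))).Sublist
        [(p ++ [i], true)] := by
      by_cases hi : i = 0
      · subst hi; simp
      · simp [hi]
    refine List.Sublist.cons _ ?_
    have H1' : ((pcL cs (p ++ [i]) 0).map (fun q => (q ++ [0], true)) ++
        (if cs.isEmpty then [] else [(p ++ [i] ++ [0], true)])).Sublist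
        (pfcnsL cs (p ++ [i]) 0).btags := by
      by_cases hcs : cs = []
      · subst hcs; simpa [pcL, pfcnsL, BTree.btags] using List.nil_sublist _
      · have : ¬ cs.isEmpty := by simp [List.isEmpty_iff, hcs]
        simpa [this] using H1
    have hmapif : (if cs.isEmpty then ([] : List (List ℕ)) else [p ++ [i]]).map
        (fun q => (q ++ [0], true)) =
        if cs.isEmpty then ([] : List (List ℕ × Bool)) else [(p ++ [i] ++ [0], true)] := by
      by_cases hcs : cs.isEmpty <;> simp [hcs]
    rw [hmapif]
    exact (H1'.append H2').append hC
termination_by ts => sizeL ts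
decreasing_by
  all_goals (simp [sizeL, size]; try omega)

theorem pc_sublist_tagList (t : RTree α) :
    (((pc t []).map (fun q => (q, true))) : List (List ℕ × Bool)).Sublist (tagList t) := by
  obtain ⟨a, cs⟩ := t
  show _root_.List.Sublist _ (ptags (RTree.node a cs) [])
  simp only [pc, ptags, List.map_append]
  refine List.Sublist.cons _ ?_
  refine List.Sublist.append (pcL_sublist cs [] 0) ?_
  by_cases hcs : cs.isEmpty <;> simp [hcs]

theorem pc_sublist_btagList (t : RTree α) :
    (((pc t []).map (fun q => (q ++ [0], true))) : List (List ℕ × Bool)).Sublist (btagList t) := by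
  obtain ⟨a, cs⟩ := t
  rw [btagList_eq]
  refine List.Sublist.cons _ ?_
  refine List.Sublist.trans ?_ (List.sublist_append_left _ _)
  have H := pcL_sublist' cs [] 0
  simp only [pc, List.map_append]
  by_cases hcs : cs = []
  · subst hcs; simpa [pcL, pfcnsL, BTree.btags] using List.nil_sublist _
  · have hne : ¬ cs.isEmpty := by simp [List.isEmpty_iff, hcs]
    simpa [hne] using H

end RTree

/-- Let `c₁, …, c_m` be the nodes of `t` that are first children of
their parents (paths of the form `q ++ [0]`, the parent being `q`), listed in the
order in which their closing tags appear in `XML(FCNS(t))`.  Then the closing tags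
of the parents appear in the same order in `XML(t)`.  (Pairwise formulation: for any
two first children, the order of their closing tags in `XML(FCNS(t))` agrees with
the order of their parents' closing tags in `XML(t)`.) -/
theorem parents_closing_same_order {α : Type} (t : RTree α) (q₁ q₂ : List ℕ)
    (h₁ : RTree.IsNode t (q₁ ++ [0])) (h₂ : RTree.IsNode t (q₂ ++ [0]))
    (h : RTree.posClose' t (q₁ ++ [0]) < RTree.posClose' t (q₂ ++ [0])) :
    RTree.posClose t q₁ < RTree.posClose t q₂ := by
  classical
  obtain ⟨a1, cs1, hs1, hne1⟩ := RTree.exists_children t q₁ h₁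
  obtain ⟨a2, cs2, hs2, hne2⟩ := RTree.exists_children t q₂ h₂
  have hm1 : q₁ ∈ RTree.pc t [] := by
    simpa using RTree.mem_pc q₁ t [] ⟨a1, cs1, hs1, hne1⟩
  have hm2 : q₂ ∈ RTree.pc t [] := by
    simpa using RTree.mem_pc q₂ t [] ⟨a2, cs2, hs2, hne2⟩
  have hinj1 : Function.Injective (fun q : List ℕ => (q ++ [0], true)) := by
    intro x y hxy
    simpa using List.append_cancel_right (congrArg Prod.fst hxy)
  have hinj2 : Function.Injective (fun q : List ℕ => (q, true)) := by
    intro x y hxy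
    simpa using congrArg Prod.fst hxy
  have hsubB := RTree.pc_sublist_btagList t
  have hsubA := RTree.pc_sublist_tagList t
  have hnB := RTree.btagList_nodup t
  have hnA := RTree.tagList_nodup t
  have hmem1B : (q₁ ++ [0], true) ∈ (RTree.pc t []).map (fun q => (q ++ [0], true)) :=
    List.mem_map.mpr ⟨q₁, hm1, rfl⟩
  have hmem2B : (q₂ ++ [0], true) ∈ (RTree.pc t []).map (fun q => (q ++ [0], true)) :=
    List.mem_map.mpr ⟨q₂, hm2, rfl⟩
  have hmem1A : (q₁, true) ∈ (RTree.pc t []).map (fun q : List ℕ => (q, true)) :=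
    List.mem_map.mpr ⟨q₁, hm1, rfl⟩
  have hmem2A : (q₂, true) ∈ (RTree.pc t []).map (fun q : List ℕ => (q, true)) :=
    List.mem_map.mpr ⟨q₂, hm2, rfl⟩
  have hposB : (RTree.btagList t).idxOf (q₁ ++ [0], true) <
      (RTree.btagList t).idxOf (q₂ ++ [0], true) := by
    have := h
    unfold RTree.posClose' at this
    omega
  have hk : (RTree.pc t []).idxOf q₁ < (RTree.pc t []).idxOf q₂ := by
    rcases lt_trichotomy ((RTree.pc t []).idxOf q₁) ((RTree.pc t []).idxOf q₂) with
      hlt | heq | hgt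
    · exact hlt
    · exfalso
      have he : q₁ = q₂ := idx_inj hm1 hm2 heq
      subst he
      exact lt_irrefl _ hposB
    · exfalso
      have hlt' : ((RTree.pc t []).map (fun q => (q ++ [0], true))).idxOf (q₂ ++ [0], true) <
          ((RTree.pc t []).map (fun q => (q ++ [0], true))).idxOf (q₁ ++ [0], true) := by
        rw [show ((q₁ ++ [0], true) : List ℕ × Bool) = (fun q : List ℕ => (q ++ [0], true)) q₁
            from rfl,
          show ((q₂ ++ [0], true) : List ℕ × Bool) = (fun q : List ℕ => (q ++ [0], true)) q₂
            from rfl,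
          indexOf_map hinj1, indexOf_map hinj1]
        exact hgt
      have := indexOf_lt_of_sublist hsubB hnB hmem2B hmem1B hlt'
      omega
  have hsA : ((RTree.pc t []).map (fun q : List ℕ => (q, true))).idxOf (q₁, true) <
      ((RTree.pc t []).map (fun q : List ℕ => (q, true))).idxOf (q₂, true) := by
    rw [show ((q₁, true) : List ℕ × Bool) = (fun q : List ℕ => (q, true)) q₁ from rfl,
      show ((q₂, true) : List ℕ × Bool) = (fun q : List ℕ => (q, true)) q₂ from rfl,
      indexOf_map hinj2, indexOf_map hinj2]
    exact hk
  have hfin := indexOf_lt_of_sublist hsubA hnA hmem1A hmem2A hsA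
  unfold RTree.posClose
  omega
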